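/- Let N be a Kähler manifold whose holomorphic sectional curvatures satisfy K̃_min ≤ K(X) ≤ K̃_max for all unit X. If M ⊂ N is a Lagrangian submanifold, then for any orthonormal tangent vectors X, Y to M, the ambient sectional curvature satisfies (3/4)K̃_min - (1/2)K̃_max ≤ K(X,Y) ≤ (3/4)K̃_max - (1/2)K̃_min. -/

import Mathlib

open scoped RealInnerProductSpace

set_option maxHeartbeats 2000000 in
theorem stmt_12_key {E : Type*} [NormedAddCommGroup E] [InnerProductSpace ℝ E]
    (J : E →ₗ[ℝ] E)
    (hJ2 : ∀ x, J (J x) = -x)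
    (K : E →ₗ[ℝ] E →ₗ[ℝ] E →ₗ[ℝ] E →ₗ[ℝ] ℝ)
    (hA1 : ∀ x y z w, K x y z w = - K y x z w)
    (hA2 : ∀ x y z w, K x y z w = - K x y w z)
    (hS : ∀ x y z w, K x y z w = K z w x y)
    (hBianchi : ∀ x y z w, K x y z w + K y z x w + K z x y w = 0)
    (hKJ : ∀ x y z w, K (J x) (J y) z w = K x y z w)
    (hKJ1 : ∀ x y z w, K (J x) y z w = - K x (J y) z w)
    (X Y : E) :
    32 * K X Y X Y =
      3 * K (X + J Y) (J (X + J Y)) (X + J Y) (J (X + J Y))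
      + 3 * K (X - J Y) (J (X - J Y)) (X - J Y) (J (X - J Y))
      - K (X + Y) (J (X + Y)) (X + Y) (J (X + Y))
      - K (X - Y) (J (X - Y)) (X - Y) (J (X - Y))
      - 4 * K X (J X) X (J X) - 4 * K Y (J Y) Y (J Y) := by
  have hsub : ∀ a b c d e, K (a - b) c d e = K a c d e - K b c d e := by
    intro a b c d e
    have hab : a = (a - b) + b := by abel
    conv_rhs => rw [hab]
    simp only [map_add, LinearMap.add_apply]
    ring
  simp only [map_add, map_sub, map_neg, LinearMap.add_apply, LinearMap.sub_apply,
    LinearMap.neg_apply, hJ2, hsub]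
  linear_combination (2 : ℝ) * hA1 X Y (J X) (J Y) + (16 : ℝ) * hA2 X Y (J X) (J Y) + (-26 : ℝ) * hS X Y (J X) (J Y) + (2 : ℝ) * hBianchi X Y (J X) (J Y) + (-6 : ℝ) * hS X Y (J Y) (J X) + (-4 : ℝ) * hBianchi X Y (J Y) (J X) + (-2 : ℝ) * hA1 X (J X) Y (J Y) + (12 : ℝ) * hA2 X (J X) Y (J Y) + (-6 : ℝ) * hS X (J X) Y (J Y) + (-2 : ℝ) * hBianchi X (J X) Y (J Y) + (-6 : ℝ) * hS X (J X) (J Y) Y + (4 : ℝ) * hA1 X (J Y) Y (J X) + (-1 : ℝ) * hA1 Y Y (J X) (J X) + (2 : ℝ) * hBianchi Y Y (J X) (J X) + (6 : ℝ) * hA2 Y (J Y) Y (J Y) + (-6 : ℝ) * hA1 Y (J Y) (J Y) Y + (6 : ℝ) * hA2 (J X) (J Y) (J X) (J Y) + (-6 : ℝ) * hA1 (J X) (J Y) (J Y) (J X) + (-26 : ℝ) * hKJ X Y X Y + (2 : ℝ) * hKJ1 X Y X (J Y) + (-2 : ℝ) * hKJ1 X Y Y (J X) + (-6 : ℝ)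 * hKJ X Y (J X) (J Y)

/-- Sectional curvature bounds for Lagrangian directions in a Kähler manifold
(Proposition 4.1, first part): if the holomorphic sectional curvature lies in
`[K̃min, K̃max]`, then for orthonormal tangent vectors `X, Y` with `⟪X, JY⟫ = 0`
(the Lagrangian condition),
`(3/4)K̃min - (1/2)K̃max ≤ K(X,Y,X,Y) ≤ (3/4)K̃max - (1/2)K̃min`. -/
theorem stmt_12 {E : Type*} [NormedAddCommGroup E] [InnerProductSpace ℝ E]
    (J : E →ₗ[ℝ] E)
    (hJ2 : ∀ x, J (J x) = -x)
    (hJorth : ∀ x y, ⟪J x, J y⟫ = ⟪x, y⟫)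
    (K : E →ₗ[ℝ] E →ₗ[ℝ] E →ₗ[ℝ] E →ₗ[ℝ] ℝ)
    (hA1 : ∀ x y z w, K x y z w = - K y x z w)
    (hA2 : ∀ x y z w, K x y z w = - K x y w z)
    (hS : ∀ x y z w, K x y z w = K z w x y)
    (hBianchi : ∀ x y z w, K x y z w + K y z x w + K z x y w = 0)
    (hKJ : ∀ x y z w, K (J x) (J y) z w = K x y z w)
    (Kmin Kmax : ℝ)
    (hpinch : ∀ x : E, ‖x‖ = 1 →
      Kmin ≤ K x (J x) x (J x) ∧ K x (J x) x (J x) ≤ Kmax)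
    (X Y : E) (hX : ‖X‖ = 1) (hY : ‖Y‖ = 1) (hXY : ⟪X, Y⟫ = 0)
    (hLag : ⟪X, J Y⟫ = 0) :
    (3 / 4 : ℝ) * Kmin - (1 / 2 : ℝ) * Kmax ≤ K X Y X Y ∧
      K X Y X Y ≤ (3 / 4 : ℝ) * Kmax - (1 / 2 : ℝ) * Kmin := by
  -- derived Kähler symmetry on a single slot
  have hKJ1 : ∀ x y z w, K (J x) y z w = - K x (J y) z w := by
    intro x y z w
    have h := hKJ x (J y) z w
    rw [hJ2] at h
    simp only [map_neg, LinearMap.neg_apply] at h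
    linarith
  -- holomorphic sectional curvature bound for vectors of norm √2
  have Qb : ∀ z : E, ‖z‖ ^ 2 = 2 →
      4 * Kmin ≤ K z (J z) z (J z) ∧ K z (J z) z (J z) ≤ 4 * Kmax := by
    intro z hz
    set s : ℝ := Real.sqrt 2 with hs
    have hs2 : s ^ 2 = 2 := Real.sq_sqrt (by norm_num)
    have hspos : 0 < s := Real.sqrt_pos.mpr (by norm_num)
    have hnz : ‖z‖ = s := by
      rw [← Real.sqrt_sq (norm_nonneg z), hz]
    have hu : ‖s⁻¹ • z‖ = 1 := by
      rw [norm_smul, hnz, Real.norm_eq_abs, abs_inv, abs_of_pos hspos,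
        inv_mul_cancel₀ hspos.ne']
    obtain ⟨h1, h2⟩ := hpinch _ hu
    have he : K (s⁻¹ • z) (J (s⁻¹ • z)) (s⁻¹ • z) (J (s⁻¹ • z))
        = (s⁻¹) ^ 4 * K z (J z) z (J z) := by
      simp only [map_smul, LinearMap.smul_apply, smul_eq_mul]
      ring
    have hs4 : (s⁻¹) ^ 4 = 1 / 4 := by
      rw [inv_pow]
      rw [show (4 : ℕ) = 2 * 2 from rfl, pow_mul, hs2]
      norm_num
    rw [he, hs4] at h1 h2
    constructor <;> linarith
  -- norms of the auxiliary vectors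
  have hYY : ⟪Y, Y⟫ = (1 : ℝ) := by
    rw [real_inner_self_eq_norm_sq, hY]; norm_num
  have hnJY : ‖J Y‖ = 1 := by
    have : ‖J Y‖ ^ 2 = 1 := by
      rw [← real_inner_self_eq_norm_sq, hJorth, hYY]
    nlinarith [norm_nonneg (J Y)]
  have n1 : ‖X + J Y‖ ^ 2 = 2 := by
    rw [norm_add_sq_real, hX, hnJY, hLag]; norm_num
  have n2 : ‖X - J Y‖ ^ 2 = 2 := by
    rw [norm_sub_sq_real, hX, hnJY, hLag]; norm_num
  have n3 : ‖X + Y‖ ^ 2 = 2 := by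
    rw [norm_add_sq_real, hX, hY, hXY]; norm_num
  have n4 : ‖X - Y‖ ^ 2 = 2 := by
    rw [norm_sub_sq_real, hX, hY, hXY]; norm_num
  obtain ⟨q1l, q1u⟩ := Qb _ n1
  obtain ⟨q2l, q2u⟩ := Qb _ n2
  obtain ⟨q3l, q3u⟩ := Qb _ n3
  obtain ⟨q4l, q4u⟩ := Qb _ n4
  obtain ⟨q5l, q5u⟩ := hpinch X hX
  obtain ⟨q6l, q6u⟩ := hpinch Y hY
  -- the key algebraic identity
  have key : 32 * K X Y X Y =
      3 * K (X + J Y) (J (X + J Y)) (X + J Y) (J (X + J Y))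
      + 3 * K (X - J Y) (J (X - J Y)) (X - J Y) (J (X - J Y))
      - K (X + Y) (J (X + Y)) (X + Y) (J (X + Y))
      - K (X - Y) (J (X - Y)) (X - Y) (J (X - Y))
      - 4 * K X (J X) X (J X) - 4 * K Y (J Y) Y (J Y) :=
    stmt_12_key J hJ2 K hA1 hA2 hS hBianchi hKJ hKJ1 X Y
  constructor <;> linarith
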